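/- Let A and B be commutative rings, I an ideal of A, J an ideal of B, k ≥ 1 an integer, and π : B → B ⧸ J^(k+1) the quotient map. Let f, g : I → B ⧸ J^(k+1) be additive and multiplicative maps whose images are contained in π(J), and suppose that f and g agree after composing with the natural projection B ⧸ J^(k+1) → B ⧸ J^k. Then the difference f − g has image contained in π(J^k) and vanishes on all products: (f − g)(a·b) = 0 for all a, b ∈ I. -/

import Mathlib

/-- Let `A`, `B` be commutative rings, `I ⊆ A`, `J ⊆ B`
ideals, `k ≥ 1`, and `π : B → B ⧸ J^(k+1)` the quotient map.  If
`f, g : I → B ⧸ J^(k+1)` are additive and multiplicative maps with images in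
`π(J)` which agree after composing with the projection
`B ⧸ J^(k+1) → B ⧸ J^k`, then `f - g` has image in `π(J^k)` and vanishes on
all products. -/
theorem stmt6
    (A B : Type*) [CommRing A] [CommRing B]
    (I : Ideal A) (J : Ideal B) (k : ℕ) (hk : 1 ≤ k)
    (f g : ↥I → B ⧸ J ^ (k + 1))
    (hf_add : ∀ a b : ↥I, f (a + b) = f a + f b)
    (hf_mul : ∀ a b : ↥I,
      f ⟨(a : A) * (b : A), I.mul_mem_left (a : A) b.2⟩ = f a * f b)
    (hf_im : ∀ a : ↥I, f a ∈ (Ideal.Quotient.mk (J ^ (k + 1))) '' (J : Set B))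
    (hg_add : ∀ a b : ↥I, g (a + b) = g a + g b)
    (hg_mul : ∀ a b : ↥I,
      g ⟨(a : A) * (b : A), I.mul_mem_left (a : A) b.2⟩ = g a * g b)
    (hg_im : ∀ a : ↥I, g a ∈ (Ideal.Quotient.mk (J ^ (k + 1))) '' (J : Set B))
    (hfg : ∀ a : ↥I,
      Ideal.Quotient.factor (S := J ^ (k + 1)) (T := J ^ k)
        (Ideal.pow_le_pow_right (by omega)) (f a) =
      Ideal.Quotient.factor (S := J ^ (k + 1)) (T := J ^ k)
        (Ideal.pow_le_pow_right (by omega)) (g a)) :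
    (∀ a : ↥I,
      (f - g) a ∈ (Ideal.Quotient.mk (J ^ (k + 1))) '' ((J ^ k : Ideal B) : Set B)) ∧
    (∀ a b : ↥I,
      (f - g) ⟨(a : A) * (b : A), I.mul_mem_left (a : A) b.2⟩ = 0) := by
  have hdiff : ∀ a : ↥I,
      f a - g a ∈ (Ideal.Quotient.mk (J ^ (k + 1))) '' ((J ^ k : Ideal B) : Set B) := by
    intro a
    obtain ⟨b, hb⟩ := Ideal.Quotient.mk_surjective (f a - g a)
    have h := hfg a
    have : Ideal.Quotient.factor (S := J ^ (k + 1)) (T := J ^ k)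
        (Ideal.pow_le_pow_right (by omega)) (f a - g a) = 0 := by
      rw [map_sub, h, sub_self]
    rw [← hb, Ideal.Quotient.factor_mk, Ideal.Quotient.eq_zero_iff_mem] at this
    exact ⟨b, this, hb⟩
  refine ⟨hdiff, fun a b => ?_⟩
  have key : ∀ x y : B ⧸ J ^ (k + 1),
      x ∈ (Ideal.Quotient.mk (J ^ (k + 1))) '' (J : Set B) →
      y ∈ (Ideal.Quotient.mk (J ^ (k + 1))) '' ((J ^ k : Ideal B) : Set B) →
      x * y = 0 := by
    rintro x y ⟨u, hu, rfl⟩ ⟨v, hv, rfl⟩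
    rw [← map_mul, Ideal.Quotient.eq_zero_iff_mem]
    have : u * v ∈ J * J ^ k := Ideal.mul_mem_mul hu hv
    rwa [← pow_succ'] at this
  have : (f - g) ⟨(a : A) * (b : A), I.mul_mem_left (a : A) b.2⟩ =
      f a * (f b - g b) + (f a - g a) * g b := by
    simp only [Pi.sub_apply, hf_mul, hg_mul]
    ring
  rw [this, key _ _ (hf_im a) (hdiff b), zero_add, mul_comm,
    key _ _ (hg_im b) (hdiff a)]
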